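/- arXiv:math/0007029 — 4 statements merged into one kernel-verified Lean document; each statement's English description precedes it below -/
import Mathlib

section
/- If (Λ, d) is a k-graph and f : ℕ^ℓ → ℕ^k is a monoid morphism, then the pullback f*(Λ) = {(λ, n) : λ ∈ Λ, n ∈ ℕ^ℓ, d(λ) = f(n)}, with degree map d(λ, n) = n, source s(λ, n) = s(λ) and range r(λ, n) = r(λ), is an ℓ-graph. -/
open CategoryTheory

universe v u

/-- A `k`-graph structure: a degree functor `d : Λ → ℕ^k` satisfying the unique
factorisation property.  Here a morphism `f : a ⟶ b` has range `r f = a` and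
source `s f = b`, so that composition `f ≫ g` corresponds to the paper's `λμ`. -/
class KGraph (k : ℕ) (Λ : Type u) [Category.{v} Λ] where
  d : ∀ {a b : Λ}, (a ⟶ b) → (Fin k → ℕ)
  d_id : ∀ a : Λ, d (𝟙 a) = 0
  d_comp : ∀ {a b c : Λ} (f : a ⟶ b) (g : b ⟶ c), d (f ≫ g) = d f + d g
  factor : ∀ {a b : Λ} (f : a ⟶ b) (m n : Fin k → ℕ), d f = m + n →
    ∃! t : Σ c : Λ, (a ⟶ c) × (c ⟶ b),
      d t.2.1 = m ∧ d t.2.2 = n ∧ t.2.1 ≫ t.2.2 = f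

/-- `IsDegree k Λ d` says that the degree map `d` makes the category `Λ` into a
`k`-graph: `d` is a functor into `ℕ^k` satisfying the unique factorisation property. -/
def IsDegree (k : ℕ) (Λ : Type u) [Category.{v} Λ]
    (d : ∀ {a b : Λ}, (a ⟶ b) → (Fin k → ℕ)) : Prop :=
  (∀ a : Λ, d (𝟙 a) = 0) ∧
  (∀ {a b c : Λ} (f : a ⟶ b) (g : b ⟶ c), d (f ≫ g) = d f + d g) ∧
  (∀ {a b : Λ} (f : a ⟶ b) (m n : Fin k → ℕ), d f = m + n →
    ∃! t : Σ c : Λ, (a ⟶ c) × (c ⟶ b),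
      d t.2.1 = m ∧ d t.2.2 = n ∧ t.2.1 ≫ t.2.2 = f)

variable {k l : ℕ} {Λ : Type u} [Category.{v} Λ] [KGraph k Λ]

/-- Objects of the pullback `f*(Λ)`: the same as the objects of `Λ`. -/
structure PBObj (k l : ℕ) (Λ : Type u) [Category.{v} Λ] [KGraph k Λ]
    (f : (Fin l → ℕ) →+ (Fin k → ℕ)) where
  obj : Λ

/-- Morphisms of the pullback `f*(Λ)`: pairs `(λ, n)` with `d λ = f n`. -/
@[ext] structure PBHom (f : (Fin l → ℕ) →+ (Fin k → ℕ)) (a b : Λ) where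
  hom : a ⟶ b
  deg : Fin l → ℕ
  compat : KGraph.d (k := k) hom = f deg

instance PBcat (f : (Fin l → ℕ) →+ (Fin k → ℕ)) : Category (PBObj k l Λ f) where
  Hom a b := PBHom f a.obj b.obj
  id a := ⟨𝟙 a.obj, 0, by simp [KGraph.d_id]⟩
  comp g h := ⟨g.hom ≫ h.hom, g.deg + h.deg, by
    rw [KGraph.d_comp, g.compat, h.compat, map_add]⟩
  id_comp g := by apply PBHom.ext <;> simp
  comp_id g := by apply PBHom.ext <;> simp
  assoc g h i := by apply PBHom.ext <;> simp [add_assoc]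

/-- The pullback `f*(Λ) = {(λ,n) : d λ = f n}` of a `k`-graph `Λ` along a monoid
morphism `f : ℕ^ℓ → ℕ^k`, with degree map `d(λ,n) = n`, is an `ℓ`-graph. -/
theorem pullback_isKGraph (k l : ℕ) (Λ : Type u) [Category.{v} Λ] [KGraph k Λ]
    (f : (Fin l → ℕ) →+ (Fin k → ℕ)) :
    IsDegree l (PBObj k l Λ f) (fun {_ _} g => PBHom.deg g) := by
  refine ⟨fun a => rfl, fun g h => rfl, ?_⟩
  intro a b g m n hmn
  have hd : KGraph.d (k := k) g.hom = f m + f n := by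
    rw [g.compat, show g.deg = m + n from hmn, map_add]
  obtain ⟨⟨c, p, q⟩, ⟨hp, hq, hpq⟩, huniq⟩ := KGraph.factor g.hom (f m) (f n) hd
  refine ⟨⟨⟨c⟩, ⟨p, m, hp⟩, ⟨q, n, hq⟩⟩, ⟨rfl, rfl, ?_⟩, ?_⟩
  · apply PBHom.ext
    · exact hpq
    · exact hmn.symm
  · rintro ⟨⟨c'⟩, ⟨p', m', hp'⟩, ⟨q', n', hq'⟩⟩ ⟨h1, h2, h3⟩
    dsimp at h1 h2
    subst h1 h2
    have hhom : p' ≫ q' = g.hom := congrArg PBHom.hom h3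
    have hc := huniq ⟨c', p', q'⟩ ⟨hp', hq', hhom⟩
    obtain ⟨hcc, hpq'⟩ := Sigma.mk.inj_iff.mp hc
    subst hcc
    obtain ⟨hpp, hqq⟩ := (Prod.mk.injEq _ _ _ _).mp (eq_of_heq hpq')
    subst hpp hqq
    rfl
end

section
/- Let Λ be a k-graph, let {n_j : j ≥ 0} be an increasing cofinal sequence in ℕ^k with n_0 = 0, and let {λ_j : j ≥ 1} be a sequence in Λ with s(λ_j) = r(λ_{j+1}) and d(λ_j) = n_j − n_{j-1}. Then there is a unique infinite path x ∈ Λ^∞ such that x(n_{j-1}, n_j) = λ_j for all j ≥ 1. -/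
open CategoryTheory

universe v u

variable (k : ℕ) (Λ : Type u) [Category.{v} Λ] [KGraph k Λ]

/-- An infinite path in a `k`-graph `Λ`: a degree-preserving functor from
`Ω_k = {(m,n) ∈ ℕ^k × ℕ^k : m ≤ n}` to `Λ`.  `vert m` is the image `x(m)` of the
object `m`, and `edge m n h` is the image `x(m,n)` of the morphism `(m,n)`. -/
structure InfPath where
  vert : (Fin k → ℕ) → Λ
  edge : ∀ m n : Fin k → ℕ, m ≤ n → (vert m ⟶ vert n)
  edge_self : ∀ m, edge m m le_rfl = 𝟙 (vert m)
  edge_comp : ∀ m n p (h₁ : m ≤ n) (h₂ : n ≤ p),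
    edge m n h₁ ≫ edge n p h₂ = edge m p (h₁.trans h₂)
  deg : ∀ m n (h : m ≤ n), KGraph.d (k := k) (edge m n h) = n - m

variable {k Λ}

/-- The shift map `σ^p` on infinite paths: `σ^p(x)(m,n) = x(m+p, n+p)`. -/
def InfPath.shift (x : InfPath k Λ) (p : Fin k → ℕ) : InfPath k Λ where
  vert m := x.vert (m + p)
  edge m n h := x.edge (m + p) (n + p) (add_le_add h (le_refl p))
  edge_self m := x.edge_self (m + p)
  edge_comp m n q h₁ h₂ := x.edge_comp _ _ _ _ _
  deg m n h := by
    rw [x.deg]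
    funext i
    simp [Nat.add_sub_add_right]

namespace KG

open KGraph

lemma d_eqToHom {a b : Λ} (h : a = b) : d (k := k) (eqToHom h) = 0 := by
  subst h; simp [d_id]

lemma sub_decomp {m p : Fin k → ℕ} (h : m ≤ p) : p = m + (p - m) := by
  funext i; have hi : m i ≤ p i := h i
  simp only [Pi.add_apply, Pi.sub_apply]; omega

noncomputable def split {a b : Λ} (f : a ⟶ b) (m : Fin k → ℕ) (hm : m ≤ d f) :
    Σ c : Λ, (a ⟶ c) × (c ⟶ b) :=
  (factor f m (d f - m) (sub_decomp hm)).exists.choose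

lemma split_spec {a b : Λ} (f : a ⟶ b) (m : Fin k → ℕ) (hm : m ≤ d f) :
    d (split f m hm).2.1 = m ∧ d (split f m hm).2.2 = d f - m ∧
      (split f m hm).2.1 ≫ (split f m hm).2.2 = f :=
  (factor f m (d f - m) (sub_decomp hm)).exists.choose_spec

lemma split_eq {a b : Λ} (f : a ⟶ b) (m : Fin k → ℕ) (hm : m ≤ d f)
    (t : Σ c : Λ, (a ⟶ c) × (c ⟶ b)) (h1 : d t.2.1 = m) (h2 : d t.2.2 = d f - m)
    (h3 : t.2.1 ≫ t.2.2 = f) : split f m hm = t :=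
  (factor f m (d f - m) (sub_decomp hm)).unique (split_spec f m hm) ⟨h1, h2, h3⟩

noncomputable def head {a b : Λ} (f : a ⟶ b) (m : Fin k → ℕ) (hm : m ≤ d f) :
    Σ c : Λ, (a ⟶ c) := ⟨(split f m hm).1, (split f m hm).2.1⟩

lemma d_head {a b : Λ} (f : a ⟶ b) (m : Fin k → ℕ) (hm : m ≤ d f) :
    d (head f m hm).2 = m := (split_spec f m hm).1

lemma head_comp {a b c : Λ} (g : a ⟶ b) (h : b ⟶ c) (f : a ⟶ c) (hf : g ≫ h = f)
    (m : Fin k → ℕ) (hm : m ≤ d g) (hmf : m ≤ d f) :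
    head f m hmf = head g m hm := by
  subst hf
  have hsplit : split (g ≫ h) m hmf =
      ⟨(split g m hm).1, (split g m hm).2.1, (split g m hm).2.2 ≫ h⟩ := by
    refine split_eq _ _ _ _ (split_spec g m hm).1 ?_ ?_
    · rw [d_comp, (split_spec g m hm).2.1, d_comp]
      funext i; have hi : m i ≤ d (k := k) g i := hm i
      simp only [Pi.add_apply, Pi.sub_apply]; omega
    · rw [← Category.assoc, (split_spec g m hm).2.2]
  unfold head; rw [hsplit]

lemma sigma_fac {a : Λ} {t t' : Σ c : Λ, (a ⟶ c)} (h : t = t') :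
    t.2 ≫ eqToHom (congrArg Sigma.fst h) = t'.2 := by subst h; simp

lemma pair_ext {a b c : Λ} {f f' : a ⟶ c} {g g' : c ⟶ b}
    (h : (⟨c, f, g⟩ : Σ x : Λ, (a ⟶ x) × (x ⟶ b)) = ⟨c, f', g'⟩) : f = f' ∧ g = g' := by
  simpa using h

def mu (vrt : ℕ → Λ) (lam : ∀ j : ℕ, vrt j ⟶ vrt (j + 1)) : ∀ j : ℕ, vrt 0 ⟶ vrt j
  | 0 => 𝟙 _
  | j + 1 => mu vrt lam j ≫ lam j

lemma d_mu (n : ℕ → Fin k → ℕ) (h0 : n 0 = 0) (hmono : Monotone n)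
    (vrt : ℕ → Λ) (lam : ∀ j : ℕ, vrt j ⟶ vrt (j + 1))
    (hs : ∀ j, d (lam j) = n (j + 1) - n j) :
    ∀ j, d (mu vrt lam j) = n j
  | 0 => by simp [mu, d_id, h0]
  | j + 1 => by
      rw [mu, d_comp, d_mu n h0 hmono vrt lam hs j, hs j]
      funext i; have hi : n j i ≤ n (j + 1) i := hmono (Nat.le_succ j) i
      simp only [Pi.add_apply, Pi.sub_apply]; omega

lemma mu_comp (vrt : ℕ → Λ) (lam : ∀ j : ℕ, vrt j ⟶ vrt (j + 1)) {j j' : ℕ} (h : j ≤ j') :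
    ∃ g : vrt j ⟶ vrt j', mu vrt lam j' = mu vrt lam j ≫ g := by
  induction j', h using Nat.le_induction with
  | base => exact ⟨𝟙 _, (Category.comp_id _).symm⟩
  | succ j' hj ih =>
      obtain ⟨g, hg⟩ := ih
      exact ⟨g ≫ lam j', by rw [mu, hg, Category.assoc]⟩

lemma head_indep (vrt : ℕ → Λ) (lam : ∀ j : ℕ, vrt j ⟶ vrt (j + 1)) (j j' : ℕ)
    (m : Fin k → ℕ) (hm : m ≤ d (mu vrt lam j)) (hm' : m ≤ d (mu vrt lam j')) :
    head (mu vrt lam j) m hm = head (mu vrt lam j') m hm' := by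
  rcases le_total j j' with h | h
  · obtain ⟨g, hg⟩ := mu_comp vrt lam h
    exact (head_comp _ g _ hg.symm m hm hm').symm
  · obtain ⟨g, hg⟩ := mu_comp vrt lam h
    exact (head_comp _ g _ hg.symm m hm' hm)


section Seq

variable (n : ℕ → Fin k → ℕ) (h0 : n 0 = 0) (hmono : Monotone n)
  (hcof : ∀ m : Fin k → ℕ, ∃ j, m ≤ n j) (vrt : ℕ → Λ)
  (lam : ∀ j : ℕ, vrt j ⟶ vrt (j + 1))
  (hs : ∀ j, d (lam j) = n (j + 1) - n j)

noncomputable def vh (m : Fin k → ℕ) : Σ c : Λ, (vrt 0 ⟶ c) :=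
  head (mu vrt lam (hcof m).choose) m
    ((hcof m).choose_spec.trans_eq (d_mu n h0 hmono vrt lam hs (hcof m).choose).symm)

lemma d_vh (m : Fin k → ℕ) : d (vh n h0 hmono hcof vrt lam hs m).2 = m :=
  d_head _ _ _

lemma vh_indep (j : ℕ) (m : Fin k → ℕ) (hm : m ≤ n j) :
    vh n h0 hmono hcof vrt lam hs m =
      head (mu vrt lam j) m (hm.trans_eq (d_mu n h0 hmono vrt lam hs j).symm) :=
  head_indep vrt lam _ j m _ _

lemma head_lead (m p : Fin k → ℕ) (h : m ≤ p) :
    head ((vh n h0 hmono hcof vrt lam hs p).2) m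
        (h.trans_eq (d_vh n h0 hmono hcof vrt lam hs p).symm) =
      vh n h0 hmono hcof vrt lam hs m := by
  have hp : p ≤ d (mu vrt lam (hcof p).choose) :=
    (hcof p).choose_spec.trans_eq (d_mu n h0 hmono vrt lam hs (hcof p).choose).symm
  have hm1 : m ≤ d ((split (mu vrt lam (hcof p).choose) p hp).2.1) := by
    rw [(split_spec _ _ _).1]; exact h
  have h2 := head_comp ((split (mu vrt lam (hcof p).choose) p hp).2.1)
      ((split (mu vrt lam (hcof p).choose) p hp).2.2)
      (mu vrt lam (hcof p).choose) ((split_spec _ _ _).2.2) m hm1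
      ((h.trans (hcof p).choose_spec).trans_eq
        (d_mu n h0 hmono vrt lam hs (hcof p).choose).symm)
  exact h2.symm.trans
    (vh_indep n h0 hmono hcof vrt lam hs (hcof p).choose m (h.trans (hcof p).choose_spec)).symm

noncomputable def edg (m p : Fin k → ℕ) (h : m ≤ p) :
    (vh n h0 hmono hcof vrt lam hs m).1 ⟶ (vh n h0 hmono hcof vrt lam hs p).1 :=
  eqToHom (congrArg Sigma.fst (head_lead n h0 hmono hcof vrt lam hs m p h)).symm ≫
    (split ((vh n h0 hmono hcof vrt lam hs p).2) m
      (h.trans_eq (d_vh n h0 hmono hcof vrt lam hs p).symm)).2.2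

lemma d_edg (m p : Fin k → ℕ) (h : m ≤ p) :
    d (edg n h0 hmono hcof vrt lam hs m p h) = p - m := by
  unfold edg
  refine (d_comp _ _).trans ?_
  rw [d_eqToHom, zero_add]
  refine ((split_spec _ _ _).2.1).trans ?_
  rw [d_vh]

lemma lead_edg (m p : Fin k → ℕ) (h : m ≤ p) :
    (vh n h0 hmono hcof vrt lam hs m).2 ≫ edg n h0 hmono hcof vrt lam hs m p h =
      (vh n h0 hmono hcof vrt lam hs p).2 := by
  have h1 := sigma_fac (head_lead n h0 hmono hcof vrt lam hs m p h)
  unfold edg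
  rw [← h1]
  show ((split _ m _).2.1 ≫ _) ≫ _ ≫ _ = _
  unfold head
  rw [Category.assoc]
  refine (congrArg (_ ≫ ·) ((eqToHom_trans_assoc _ _ _).trans ?_)).trans (split_spec _ _ _).2.2
  exact (congrArg (· ≫ _) (eqToHom_refl _ _)).trans (Category.id_comp _)

lemma edg_unique (m p : Fin k → ℕ) (h : m ≤ p)
    (e : (vh n h0 hmono hcof vrt lam hs m).1 ⟶ (vh n h0 hmono hcof vrt lam hs p).1)
    (hd : d e = p - m)
    (hc : (vh n h0 hmono hcof vrt lam hs m).2 ≫ e = (vh n h0 hmono hcof vrt lam hs p).2) :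
    e = edg n h0 hmono hcof vrt lam hs m p h := by
  have hdec : d ((vh n h0 hmono hcof vrt lam hs p).2) = m + (p - m) :=
    (d_vh n h0 hmono hcof vrt lam hs p).trans (sub_decomp h)
  have hu := (KGraph.factor ((vh n h0 hmono hcof vrt lam hs p).2) m (p - m) hdec).unique
    (y₁ := ⟨(vh n h0 hmono hcof vrt lam hs m).1, (vh n h0 hmono hcof vrt lam hs m).2, e⟩)
    (y₂ := ⟨(vh n h0 hmono hcof vrt lam hs m).1, (vh n h0 hmono hcof vrt lam hs m).2,
      edg n h0 hmono hcof vrt lam hs m p h⟩)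
    ⟨d_vh n h0 hmono hcof vrt lam hs m, hd, hc⟩
    ⟨d_vh n h0 hmono hcof vrt lam hs m, d_edg n h0 hmono hcof vrt lam hs m p h,
      lead_edg n h0 hmono hcof vrt lam hs m p h⟩
  exact (pair_ext hu).2

lemma vh_n (j : ℕ) : vh n h0 hmono hcof vrt lam hs (n j) = ⟨vrt j, mu vrt lam j⟩ := by
  rw [vh_indep n h0 hmono hcof vrt lam hs j (n j) le_rfl]
  have hm : n j ≤ d (mu vrt lam j) := le_rfl.trans_eq (d_mu n h0 hmono vrt lam hs j).symm
  have hsplit : split (mu vrt lam j) (n j) hm = ⟨vrt j, mu vrt lam j, 𝟙 (vrt j)⟩ := by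
    refine split_eq _ _ _ _ (d_mu n h0 hmono vrt lam hs j) ?_ (Category.comp_id _)
    rw [d_id, d_mu n h0 hmono vrt lam hs j]
    funext i; simp
  unfold head; rw [hsplit]

end Seq


lemma edge_eqToHom (x : InfPath k Λ) {m p : Fin k → ℕ} (h : m ≤ p) (hmp : m = p) :
    x.edge m p h = eqToHom (congrArg x.vert hmp) := by
  subst hmp; exact x.edge_self m

lemma infPath_ext {x y : InfPath k Λ} (hv : ∀ m, x.vert m = y.vert m)
    (he : ∀ m p (h : m ≤ p), HEq (x.edge m p h) (y.edge m p h)) : x = y := by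
  obtain ⟨xv, xe, hs1, hc1, hd1⟩ := x
  obtain ⟨yv, ye, hs2, hc2, hd2⟩ := y
  dsimp only at hv he
  have hv' : xv = yv := funext hv
  subst hv'
  have he' : xe = ye := by
    funext m p h
    exact eq_of_heq (he m p h)
  subst he'
  rfl

end KG


/-- Given an increasing cofinal sequence `n_j` in `ℕ^k` with `n 0 = 0` and a
composable sequence of morphisms `λ_j : v (j-1) ⟶ v j` with `d λ_j = n_j - n_{j-1}`,
there is a unique infinite path `x` with `x(n_{j-1}, n_j) = λ_j` for all `j`. -/
theorem infPath_from_cofinal_sequence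
    (k : ℕ) (Λ : Type u) [Category.{v} Λ] [KGraph k Λ]
    (n : ℕ → (Fin k → ℕ)) (h0 : n 0 = 0) (hmono : Monotone n)
    (hcof : ∀ m : Fin k → ℕ, ∃ j, m ≤ n j)
    (vrt : ℕ → Λ) (lam : ∀ j : ℕ, vrt j ⟶ vrt (j + 1))
    (hs : ∀ j, KGraph.d (k := k) (lam j) = n (j + 1) - n j) :
    ∃! x : InfPath k Λ, ∀ j : ℕ, x.vert (n j) = vrt j ∧
      HEq (x.edge (n j) (n (j + 1)) (hmono (Nat.le_succ j))) (lam j) := by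
  classical
  refine ⟨{
    vert := fun m => (KG.vh n h0 hmono hcof vrt lam hs m).1
    edge := fun m p h => KG.edg n h0 hmono hcof vrt lam hs m p h
    edge_self := fun m => by
      refine (KG.edg_unique n h0 hmono hcof vrt lam hs m m le_rfl (𝟙 _) ?_
        (Category.comp_id _)).symm
      rw [KGraph.d_id]; funext i; simp
    edge_comp := fun m p q h₁ h₂ => by
      refine KG.edg_unique n h0 hmono hcof vrt lam hs m q (h₁.trans h₂) _ ?_ ?_
      · rw [KGraph.d_comp, KG.d_edg, KG.d_edg]
        funext i
        have hi1 : m i ≤ p i := h₁ i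
        have hi2 : p i ≤ q i := h₂ i
        simp only [Pi.add_apply, Pi.sub_apply]; omega
      · rw [← Category.assoc, KG.lead_edg, KG.lead_edg]
    deg := fun m p h => KG.d_edg n h0 hmono hcof vrt lam hs m p h },
    fun j => ⟨congrArg Sigma.fst (KG.vh_n n h0 hmono hcof vrt lam hs j), by
      have ej := congrArg Sigma.fst (KG.vh_n n h0 hmono hcof vrt lam hs j)
      have ej1 := congrArg Sigma.fst (KG.vh_n n h0 hmono hcof vrt lam hs (j + 1))
      refine (conj_eqToHom_iff_heq _ _ ej ej1).mp ?_
      refine (KG.edg_unique n h0 hmono hcof vrt lam hs (n j) (n (j + 1))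
        (hmono (Nat.le_succ j)) _ ?_ ?_).symm
      · rw [KGraph.d_comp, KGraph.d_comp, KG.d_eqToHom, KG.d_eqToHom, hs j]
        funext i; simp
      · have f1 : (KG.vh n h0 hmono hcof vrt lam hs (n j)).2 ≫ eqToHom ej =
            KG.mu vrt lam j := KG.sigma_fac (KG.vh_n n h0 hmono hcof vrt lam hs j)
        have f2 : (KG.vh n h0 hmono hcof vrt lam hs (n (j + 1))).2 ≫ eqToHom ej1 =
            KG.mu vrt lam (j + 1) := KG.sigma_fac (KG.vh_n n h0 hmono hcof vrt lam hs (j + 1))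
        have f2' : (KG.vh n h0 hmono hcof vrt lam hs (n (j + 1))).2 =
            KG.mu vrt lam (j + 1) ≫ eqToHom ej1.symm := by
          rw [← f2, Category.assoc, eqToHom_trans, eqToHom_refl, Category.comp_id]
        rw [← Category.assoc, f1, f2']
        show _ = (KG.mu vrt lam j ≫ lam j) ≫ _
        rw [Category.assoc]⟩, ?_⟩
  · -- uniqueness
    intro y hy
    have e0 : y.vert 0 = vrt 0 := by have := (hy 0).1; rwa [h0] at this
    have hz : ∀ m : Fin k → ℕ, (0 : Fin k → ℕ) ≤ m := fun m i => Nat.zero_le _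
    set L : ∀ m : Fin k → ℕ, vrt 0 ⟶ y.vert m :=
      fun m => eqToHom e0.symm ≫ y.edge 0 m (hz m) with hLdef
    have dL : ∀ m, KGraph.d (k := k) (L m) = m := by
      intro m
      rw [hLdef]
      rw [KGraph.d_comp, KG.d_eqToHom, y.deg, zero_add]
      funext i; simp
    have hLedge : ∀ m p (hmp : m ≤ p), L m ≫ y.edge m p hmp = L p := by
      intro m p hmp
      rw [hLdef]
      rw [Category.assoc, y.edge_comp]
    have hLmu : ∀ j, L (n j) ≫ eqToHom ((hy j).1) = KG.mu vrt lam j := by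
      intro j; induction j with
      | zero =>
        rw [hLdef]
        show (eqToHom e0.symm ≫ y.edge 0 (n 0) _) ≫ _ = _
        rw [KG.edge_eqToHom y _ h0.symm]
        simp [KG.mu, eqToHom_trans]
      | succ j ih =>
        have hedge : y.edge (n j) (n (j + 1)) (hmono (Nat.le_succ j)) =
            eqToHom ((hy j).1) ≫ lam j ≫ eqToHom ((hy (j + 1)).1).symm :=
          (conj_eqToHom_iff_heq _ _ ((hy j).1) ((hy (j + 1)).1)).mpr (hy j).2
        have hcmp : L (n (j + 1)) = L (n j) ≫ y.edge (n j) (n (j + 1)) (hmono (Nat.le_succ j)) :=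
          (hLedge _ _ _).symm
        rw [hcmp, hedge]
        simp only [Category.assoc, eqToHom_trans, eqToHom_refl, Category.comp_id]
        rw [← Category.assoc, ih]
        rfl
    have key : ∀ m : Fin k → ℕ, KG.vh n h0 hmono hcof vrt lam hs m = ⟨y.vert m, L m⟩ := by
      intro m
      have hmj : m ≤ n (hcof m).choose := (hcof m).choose_spec
      have hsplit : KG.split (KG.mu vrt lam (hcof m).choose) m
          (hmj.trans_eq (KG.d_mu n h0 hmono vrt lam hs (hcof m).choose).symm) =
          ⟨y.vert m, L m, y.edge m (n (hcof m).choose) hmj ≫ eqToHom ((hy (hcof m).choose).1)⟩ := by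
        refine KG.split_eq _ _ _ _ (dL m) ?_ ?_
        · rw [KGraph.d_comp, KG.d_eqToHom, y.deg, KG.d_mu n h0 hmono vrt lam hs]
          funext i; simp
        · rw [← Category.assoc, hLedge, hLmu]
      rw [KG.vh_indep n h0 hmono hcof vrt lam hs (hcof m).choose m hmj]
      unfold KG.head; rw [hsplit]
    have hvert : ∀ m, y.vert m = (KG.vh n h0 hmono hcof vrt lam hs m).1 :=
      fun m => (congrArg Sigma.fst (key m)).symm
    have hfac : ∀ m, (KG.vh n h0 hmono hcof vrt lam hs m).2 ≫
        eqToHom (congrArg Sigma.fst (key m)) = L m := fun m => KG.sigma_fac (key m)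
    refine KG.infPath_ext hvert ?_
    intro m p hmp
    refine (conj_eqToHom_iff_heq _ _ (hvert m) (hvert p)).mp ?_
    have hE : eqToHom (congrArg Sigma.fst (key m)) ≫ y.edge m p hmp ≫
        eqToHom (congrArg Sigma.fst (key p)).symm =
        KG.edg n h0 hmono hcof vrt lam hs m p hmp := by
      refine KG.edg_unique n h0 hmono hcof vrt lam hs m p hmp _ ?_ ?_
      · rw [KGraph.d_comp, KGraph.d_comp, KG.d_eqToHom, KG.d_eqToHom, y.deg]
        funext i; simp
      · rw [← Category.assoc, hfac m, ← Category.assoc, hLedge, comp_eqToHom_iff]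
        exact (hfac p).symm
    show y.edge m p hmp = eqToHom (hvert m) ≫
      KG.edg n h0 hmono hcof vrt lam hs m p hmp ≫ eqToHom (hvert p).symm
    rw [← hE]
    simp only [Category.assoc, eqToHom_trans, eqToHom_refl, Category.comp_id,
      Category.id_comp]
    rw [← Category.assoc, eqToHom_trans, eqToHom_refl, Category.id_comp]
end

section
/- Let Λ be a k-graph on which a countable group G acts freely (i.e., freely on Λ^0), and let q : Λ → Λ/G be the quotient map. Then there exists a functor c : Λ/G → G and a degree-preserving isomorphism of k-graphs Λ ≅ G ×_c (Λ/G) which is equivariant for the G-actions, where G acts on G ×_c (Λ/G) by g·(h, λ) = (gh, λ). -/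
open CategoryTheory

universe v u

variable {k : ℕ} {Λ : Type u} [Category.{v} Λ] [KGraph k Λ]
variable {G : Type u} [Group G]

/-- Objects of the skew product `G ×_c Λ`: pairs `(g, v)` with `g ∈ G`, `v ∈ Λ^0`. -/
structure SkewObj (G : Type u) [Group G] (Λ : Type u) [Category.{v} Λ] where
  grp : G
  pt : Λ

/-- The skew product category `G ×_c Λ` associated to a functor `c : Λ → G`:
a morphism `(g, λ)` has range `(g, r λ)` and source `(g ⬝ c(λ), s λ)`, and
`(g, λ)(g ⬝ c(λ), μ) = (g, λμ)`. -/
def SkewCat (c : ∀ {a b : Λ}, (a ⟶ b) → G)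
    (hc_id : ∀ a : Λ, c (𝟙 a) = 1)
    (hc_comp : ∀ {a b e : Λ} (f : a ⟶ b) (g : b ⟶ e), c (f ≫ g) = c f * c g) :
    Category (SkewObj G Λ) where
  Hom A B := {f : A.pt ⟶ B.pt // B.grp = A.grp * c f}
  id A := ⟨𝟙 A.pt, by rw [hc_id, mul_one]⟩
  comp {A B C} f g := ⟨f.1 ≫ g.1, by rw [hc_comp, ← mul_assoc, ← f.2, ← g.2]⟩
  id_comp f := by apply Subtype.ext; simp
  comp_id f := by apply Subtype.ext; simp
  assoc f g h := by apply Subtype.ext; simp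

/-- If a countable group `G` acts freely on a `k`-graph `Λ`, and `q : Λ → Λ/G` is
the quotient map onto the quotient `k`-graph `Λ' = Λ/G`, then there is a functor
`c : Λ/G → G` and an equivariant degree-preserving isomorphism
`Λ ≅ G ×_c (Λ/G)`, where `G` acts on the skew product by `g ⬝ (h, λ) = (gh, λ)`.
Here a morphism of the skew product `G ×_c Λ'` from `(g, a')` to `(g ⬝ c(f), b')`
is encoded as an element of the subtype `{f : a' ⟶ b' // ⋯}` as in `SkewCat`. -/
theorem free_action_skew_product
    (k : ℕ) (Λ : Type u) [Category.{v} Λ] [KGraph k Λ]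
    (G : Type u) [Group G] [Countable G]
    -- an action of `G` on `Λ` by degree-preserving automorphisms:
    (aobj : G → Λ → Λ)
    (amor : ∀ (g : G) {a b : Λ}, (a ⟶ b) → (aobj g a ⟶ aobj g b))
    (aobj_one : ∀ a, aobj 1 a = a)
    (aobj_mul : ∀ g h a, aobj (g * h) a = aobj g (aobj h a))
    (amor_one : ∀ {a b : Λ} (f : a ⟶ b), HEq (amor 1 f) f)
    (amor_mul : ∀ (g h : G) {a b : Λ} (f : a ⟶ b),
      HEq (amor (g * h) f) (amor g (amor h f)))
    (amor_id : ∀ (g : G) (a : Λ), amor g (𝟙 a) = 𝟙 (aobj g a))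
    (amor_comp : ∀ (g : G) {a b e : Λ} (f : a ⟶ b) (f' : b ⟶ e),
      amor g (f ≫ f') = amor g f ≫ amor g f')
    (amor_deg : ∀ (g : G) {a b : Λ} (f : a ⟶ b),
      KGraph.d (k := k) (amor g f) = KGraph.d (k := k) f)
    -- the action is free on the objects `Λ^0`:
    (hfree : ∀ (g : G) (a : Λ), aobj g a = a → g = 1)
    -- `q : Λ → Λ' = Λ/G` is the quotient k-graph morphism:
    (Λ' : Type u) [Category.{v} Λ'] [KGraph k Λ']
    (qo : Λ → Λ') (qm : ∀ {a b : Λ}, (a ⟶ b) → (qo a ⟶ qo b))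
    (qm_id : ∀ a : Λ, qm (𝟙 a) = 𝟙 (qo a))
    (qm_comp : ∀ {a b e : Λ} (f : a ⟶ b) (g : b ⟶ e), qm (f ≫ g) = qm f ≫ qm g)
    (qm_deg : ∀ {a b : Λ} (f : a ⟶ b), KGraph.d (k := k) (qm f) = KGraph.d (k := k) f)
    (qo_surj : Function.Surjective qo)
    (qm_surj : ∀ {a' b' : Λ'} (f' : a' ⟶ b'), ∃ (a b : Λ) (f : a ⟶ b)
      (ha : qo a = a') (hb : qo b = b'),
      f' = eqToHom ha.symm ≫ qm f ≫ eqToHom hb)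
    (qo_orbit : ∀ a b : Λ, qo a = qo b ↔ ∃ g, aobj g a = b)
    (qm_orbit : ∀ {a b a₂ b₂ : Λ} (f : a ⟶ b) (f₂ : a₂ ⟶ b₂),
      (qo a = qo a₂ ∧ qo b = qo b₂ ∧ HEq (qm f) (qm f₂)) ↔
        ∃ g, aobj g a = a₂ ∧ aobj g b = b₂ ∧ HEq (amor g f) f₂) :
    -- conclusion: a functor `c : Λ/G → G` and an equivariant isomorphism
    -- `Λ ≅ G ×_c (Λ/G)` of `k`-graphs
    ∃ (c : ∀ a' b' : Λ', (a' ⟶ b') → G),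
      (∀ a' : Λ', c a' a' (𝟙 a') = 1) ∧
      (∀ {a' b' e' : Λ'} (f : a' ⟶ b') (g : b' ⟶ e'),
        c a' e' (f ≫ g) = c a' b' f * c b' e' g) ∧
      ∃ (Fo : Λ → SkewObj G Λ')
        (Fm : ∀ a b : Λ, (a ⟶ b) →
          {f' : (Fo a).pt ⟶ (Fo b).pt // (Fo b).grp = (Fo a).grp * c _ _ f'}),
        Function.Bijective Fo ∧
        (∀ a b : Λ, Function.Bijective (Fm a b)) ∧
        (∀ a : Λ, (Fm a a (𝟙 a)).1 = 𝟙 (Fo a).pt) ∧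
        (∀ {a b e : Λ} (f : a ⟶ b) (g : b ⟶ e),
          (Fm a e (f ≫ g)).1 = (Fm a b f).1 ≫ (Fm b e g).1) ∧
        (∀ {a b : Λ} (f : a ⟶ b),
          KGraph.d (k := k) (Fm a b f).1 = KGraph.d (k := k) f) ∧
        (∀ (g : G) (a : Λ), Fo (aobj g a) = ⟨g * (Fo a).grp, (Fo a).pt⟩) ∧
        (∀ (g : G) {a b : Λ} (f : a ⟶ b),
          HEq (Fm _ _ (amor g f)).1 (Fm a b f).1) := by
  classical
  -- basic action lemmas
  have ainv : ∀ (g : G) (x : Λ), aobj g⁻¹ (aobj g x) = x := by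
    intro g x
    rw [← aobj_mul, inv_mul_cancel, aobj_one]
  have afree : ∀ (g h : G) (x : Λ), aobj g x = aobj h x → g = h := by
    intro g h x hx
    have h1 : aobj (h⁻¹ * g) x = x := by
      rw [aobj_mul, hx, ← aobj_mul, inv_mul_cancel, aobj_one]
    have h2 := hfree _ _ h1
    rwa [inv_mul_eq_one, eq_comm] at h2
  choose σ hσ using qo_surj
  have hgrp' : ∀ a : Λ, ∃ g, aobj g (σ (qo a)) = a := by
    intro a
    exact (qo_orbit (σ (qo a)) a).mp (hσ (qo a))
  choose grp hgrp using hgrp'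
  have grp_unique : ∀ (h : G) (a : Λ), aobj h (σ (qo a)) = a → h = grp a :=
    fun h a ha => afree h (grp a) _ (ha.trans (hgrp a).symm)
  have qo_trans : ∀ (g : G) (a : Λ), qo (aobj g a) = qo a := by
    intro g a
    exact ((qo_orbit a (aobj g a)).mpr ⟨g, rfl⟩).symm
  have grp_trans : ∀ (g : G) (a : Λ), grp (aobj g a) = g * grp a := by
    intro g a
    refine (grp_unique _ _ ?_).symm
    rw [qo_trans, aobj_mul, hgrp]
  -- HEq helpers
  have heq_id : ∀ {a b : Λ'}, a = b → HEq (𝟙 a) (𝟙 b) := by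
    intro a b h; subst h; rfl
  have heq_comp : ∀ {a b e a₂ b₂ e₂ : Λ'} (f : a ⟶ b) (g : b ⟶ e)
      (f₂ : a₂ ⟶ b₂) (g₂ : b₂ ⟶ e₂), a = a₂ → b = b₂ → e = e₂ →
      HEq f f₂ → HEq g g₂ → HEq (f ≫ g) (f₂ ≫ g₂) := by
    intro a b e a₂ b₂ e₂ f g f₂ g₂ ha hb he hf hg
    subst ha; subst hb; subst he
    rw [eq_of_heq hf, eq_of_heq hg]
  have lift_ex : ∀ {a' b' : Λ'} (f' : a' ⟶ b'), ∃ (a b : Λ) (f : a ⟶ b),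
      qo a = a' ∧ qo b = b' ∧ HEq (qm f) f' := by
    intro a' b' f'
    obtain ⟨a, b, f, ha, hb, hf⟩ := qm_surj f'
    refine ⟨a, b, f, ha, hb, ?_⟩
    subst ha; subst hb
    simp only [eqToHom_refl, Category.id_comp, Category.comp_id] at hf
    exact heq_of_eq hf.symm
  have amor_heq : ∀ (g : G) {a b : Λ} (f : a ⟶ b),
      HEq (qm (amor g f)) (qm f) :=
    fun g a b f => ((qm_orbit f (amor g f)).mpr ⟨g, rfl, rfl, HEq.rfl⟩).2.2.symm
  -- uniqueness of the cocycle value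
  have key : ∀ {a b a₂ b₂ : Λ} (f : a ⟶ b) (f₂ : a₂ ⟶ b₂), qo a = qo a₂ →
      qo b = qo b₂ → HEq (qm f) (qm f₂) →
      (grp a)⁻¹ * grp b = (grp a₂)⁻¹ * grp b₂ := by
    intro a b a₂ b₂ f f₂ ha hb hf
    obtain ⟨g, hga, hgb, -⟩ := (qm_orbit f f₂).mp ⟨ha, hb, hf⟩
    rw [← hga, ← hgb, grp_trans, grp_trans]
    group
  have hc_ex : ∀ (a' b' : Λ') (f' : a' ⟶ b'), ∃ g : G,
      ∀ (a b : Λ) (f : a ⟶ b), qo a = a' → qo b = b' → HEq (qm f) f' →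
        g = (grp a)⁻¹ * grp b := by
    intro a' b' f'
    obtain ⟨a₀, b₀, f₀, ha₀, hb₀, hf₀⟩ := lift_ex f'
    refine ⟨(grp a₀)⁻¹ * grp b₀, fun a b f ha hb hf => ?_⟩
    exact key f₀ f (ha₀.trans ha.symm) (hb₀.trans hb.symm) (hf₀.trans hf.symm)
  choose c hc using hc_ex
  have char : ∀ {a b : Λ} (f : a ⟶ b),
      c (qo a) (qo b) (qm f) = (grp a)⁻¹ * grp b :=
    fun {a b} f => hc _ _ _ a b f rfl rfl HEq.rfl
  have c_id : ∀ a' : Λ', c a' a' (𝟙 a') = 1 := by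
    intro a'
    have h1 : HEq (qm (𝟙 (σ a'))) (𝟙 a') := by
      rw [qm_id]; exact heq_id (hσ a')
    rw [hc a' a' (𝟙 a') (σ a') (σ a') (𝟙 (σ a')) (hσ a') (hσ a') h1,
      inv_mul_cancel]
  have c_comp : ∀ {a' b' e' : Λ'} (f' : a' ⟶ b') (g' : b' ⟶ e'),
      c a' e' (f' ≫ g') = c a' b' f' * c b' e' g' := by
    intro a' b' e' f' g'
    obtain ⟨a, b, f, ha, hb, hf⟩ := lift_ex f'
    obtain ⟨b₂, e, g, hb₂, he, hg⟩ := lift_ex g'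
    obtain ⟨h, hh⟩ := (qo_orbit b₂ b).mp (hb₂.trans hb.symm)
    subst hh
    have hq : HEq (qm (amor h g)) g' := (amor_heq h g).trans hg
    have hheq : HEq (qm (f ≫ amor h g)) (f' ≫ g') := by
      rw [qm_comp]
      exact heq_comp _ _ _ _ ha hb ((qo_trans h e).trans he) hf hq
    rw [hc a' e' (f' ≫ g') a (aobj h e) (f ≫ amor h g) ha
        ((qo_trans h e).trans he) hheq,
      hc a' b' f' a (aobj h b₂) f ha hb hf,
      hc b' e' g' b₂ e g hb₂ he hg,
      grp_trans, grp_trans]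
    group
  refine ⟨c, c_id, fun f g => c_comp f g,
    fun a => ⟨grp a, qo a⟩,
    fun a b f => ⟨qm f, by rw [char f, mul_inv_cancel_left]⟩,
    ?_, ?_, fun a => qm_id a, fun f g => qm_comp f g, fun f => qm_deg f,
    ?_, fun g a b f => amor_heq g f⟩
  · -- Fo bijective
    constructor
    · intro a b hab
      have h1 : grp a = grp b := congrArg SkewObj.grp hab
      have h2 : qo a = qo b := congrArg SkewObj.pt hab
      calc a = aobj (grp a) (σ (qo a)) := (hgrp a).symm
        _ = aobj (grp b) (σ (qo b)) := by rw [h1, h2]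
        _ = b := hgrp b
    · rintro ⟨g, v'⟩
      refine ⟨aobj g (σ v'), ?_⟩
      have h2 : qo (aobj g (σ v')) = v' := (qo_trans g (σ v')).trans (hσ v')
      have h0 : (1 : G) = grp (σ v') := by
        refine grp_unique 1 (σ v') ?_
        rw [hσ, aobj_one]
      have h1 : grp (aobj g (σ v')) = g := by
        rw [grp_trans, ← h0, mul_one]
      simp only [h1, h2]
  · -- Fm bijective
    intro a b
    constructor
    · intro f f₂ hf
      have hval : qm f = qm f₂ := congrArg Subtype.val hf
      obtain ⟨g, hga, hgb, hgf⟩ := (qm_orbit f f₂).mp ⟨rfl, rfl, heq_of_eq hval⟩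
      have g1 : g = 1 := hfree g a hga
      rw [g1] at hgf
      exact eq_of_heq ((amor_one f).symm.trans hgf)
    · rintro ⟨f', hf'⟩
      obtain ⟨a₀, b₀, f₀, ha₀, hb₀, hf₀⟩ := lift_ex f'
      obtain ⟨h, hh⟩ := (qo_orbit a₀ a).mp ha₀
      subst hh
      have hcval : c (qo (aobj h a₀)) (qo b) f' = (grp a₀)⁻¹ * grp b₀ :=
        hc _ _ f' a₀ b₀ f₀ (qo_trans h a₀).symm hb₀ hf₀
      have hb' : grp b = grp (aobj h b₀) := by
        rw [grp_trans]
        have : grp b = grp (aobj h a₀) * ((grp a₀)⁻¹ * grp b₀) := by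
          rw [← hcval]; exact hf'
        rw [this, grp_trans]
        group
      have heb : aobj h b₀ = b := by
        have hqb : qo (aobj h b₀) = qo b := (qo_trans h b₀).trans hb₀
        calc aobj h b₀ = aobj (grp (aobj h b₀)) (σ (qo (aobj h b₀))) :=
              (hgrp _).symm
          _ = aobj (grp b) (σ (qo b)) := by rw [← hb', hqb]
          _ = b := hgrp b
      subst heb
      refine ⟨amor h f₀, Subtype.ext ?_⟩
      exact eq_of_heq ((amor_heq h f₀).trans hf₀)
  · -- Fo equivariance
    intro g a
    simp only [grp_trans, qo_trans]
end

section
/- Let E be a row-finite directed graph with no sinks. Its path category E* satisfies the aperiodicity condition (every vertex receives an aperiodic infinite path) if and only if every loop (cycle) in E has an exit. -/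
/-- A countable directed graph `E = (E⁰, E¹, r, s)`. -/
structure DirGraph where
  V : Type
  E : Type
  r : E → V
  s : E → V

/-- An infinite path in `E`: a sequence of edges `x_0 x_1 x_2 ⋯` with
`r(x_{n+1}) = s(x_n)`, so that `x` is "received" at the vertex `r(x_0)`. -/
def DirGraph.IsInfPath (Γ : DirGraph) (x : ℕ → Γ.E) : Prop :=
  ∀ n, Γ.r (x (n + 1)) = Γ.s (x n)

/-- An infinite path `x` is aperiodic if `σ^m x = σ^n x` implies `m = n`,
where `σ` is the shift `(σ x)_j = x_{j+1}`. -/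
def DirGraph.AperiodicPath (Γ : DirGraph) (x : ℕ → Γ.E) : Prop :=
  ∀ m n : ℕ, (fun j => x (j + m)) = (fun j => x (j + n)) → m = n

/-- A loop of length `n > 0` in `E`: edges `e_0, …, e_{n-1}` with
`r(e_{i+1}) = s(e_i)` and `r(e_0) = s(e_{n-1})`. -/
def DirGraph.IsLoop (Γ : DirGraph) (e : ℕ → Γ.E) (n : ℕ) : Prop :=
  0 < n ∧ (∀ i, i + 1 < n → Γ.r (e (i + 1)) = Γ.s (e i)) ∧ Γ.r (e 0) = Γ.s (e (n - 1))

/-- The loop `e_0, …, e_{n-1}` has an exit: some vertex `r(e_i)` on the loop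
receives an edge different from `e_i`. -/
def DirGraph.LoopHasExit (Γ : DirGraph) (e : ℕ → Γ.E) (n : ℕ) : Prop :=
  ∃ i < n, ∃ f : Γ.E, Γ.r f = Γ.r (e i) ∧ f ≠ e i

namespace AperAux

/-- A finite path of length `L` (only the first `L` entries matter). -/
def FinPath (Γ : DirGraph) (w : ℕ → Γ.E) (L : ℕ) : Prop :=
  ∀ i, i + 1 < L → Γ.r (w (i + 1)) = Γ.s (w i)

variable {Γ : DirGraph}

lemma extend_one (hnosink : ∀ v : Γ.V, {f : Γ.E | Γ.r f = v}.Nonempty)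
    {w : ℕ → Γ.E} {L : ℕ} (hw : FinPath Γ w L) (hL : 1 ≤ L) :
    ∃ w', FinPath Γ w' (L + 1) ∧ ∀ i < L, w' i = w i := by
  obtain ⟨f, hf⟩ := hnosink (Γ.s (w (L - 1)))
  refine ⟨fun i => if i < L then w i else f, ?_, fun i hi => if_pos hi⟩
  intro i hi
  rcases lt_or_ge (i + 1) L with h | h
  · simp only [if_pos h, if_pos (by omega : i < L)]
    exact hw i h
  · have h1 : i + 1 = L := by omega
    simp only [if_neg (by omega : ¬ i + 1 < L), if_pos (by omega : i < L)]
    have h2 : i = L - 1 := by omega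
    rw [h2]; exact hf

lemma extend_many (hnosink : ∀ v : Γ.V, {f : Γ.E | Γ.r f = v}.Nonempty)
    {w : ℕ → Γ.E} {L : ℕ} (hw : FinPath Γ w L) (hL : 1 ≤ L) (L' : ℕ) (hL' : L ≤ L') :
    ∃ w', FinPath Γ w' L' ∧ ∀ i < L, w' i = w i := by
  induction L', hL' using Nat.le_induction with
  | base => exact ⟨w, hw, fun i _ => rfl⟩
  | succ n hn ih =>
    obtain ⟨u, hu, hagree⟩ := ih
    obtain ⟨u', hu', hagree'⟩ := extend_one hnosink hu (by omega)
    exact ⟨u', hu', fun i hi => (hagree' i (by omega)).trans (hagree i hi)⟩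

/-- The key extension lemma: any finite path can be extended to a finite path
witnessing a failure of periodicity with offset `m` and period `p`. -/
lemma key_extend (hnosink : ∀ v : Γ.V, {f : Γ.E | Γ.r f = v}.Nonempty)
    (hexit : ∀ (e : ℕ → Γ.E) (n : ℕ), Γ.IsLoop e n → Γ.LoopHasExit e n)
    {w : ℕ → Γ.E} {L : ℕ} (hw : FinPath Γ w L) (hL : 1 ≤ L) (m p : ℕ) (hp : 1 ≤ p) :
    ∃ wl : (ℕ → Γ.E) × ℕ, (FinPath Γ wl.1 wl.2 ∧ 1 ≤ wl.2) ∧ L < wl.2 ∧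
      (∀ i < L, wl.1 i = w i) ∧
      ∃ k, m ≤ k ∧ k + p < wl.2 ∧ wl.1 k ≠ wl.1 (k + p) := by
  set L₁ := L + m + p + 1 with hL₁def
  obtain ⟨u, hu, hua⟩ := extend_many hnosink hw hL L₁ (by omega)
  by_cases hper : ∀ k, m ≤ k → k + p < L₁ → u k = u (k + p)
  · -- the path is forced periodic on `[m, L₁)`; find a loop and exit it
    have hform : ∀ j, m ≤ j → j < L₁ → u j = u (m + (j - m) % p) := by
      intro j
      induction j using Nat.strong_induction_on with
      | _ j ih =>
        intro hmj hjL
        rcases lt_or_ge (j - m) p with h | h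
        · rw [Nat.mod_eq_of_lt h]
          congr 1; omega
        · have h1 : m ≤ j - p := by omega
          have h2 := hper (j - p) h1 (by omega)
          have h3 : j - p + p = j := by omega
          rw [h3] at h2
          rw [← h2, ih (j - p) (by omega) h1 (by omega)]
          congr 2
          have h4 : j - m = (j - p - m) + p := by omega
          rw [h4, Nat.add_mod_right]
    have hclose : Γ.r (u m) = Γ.s (u (m + (p - 1))) := by
      have h1 : Γ.r (u (m + p)) = Γ.s (u (m + (p - 1))) := by
        have h0 := hu (m + (p - 1)) (by omega)
        have h2 : m + (p - 1) + 1 = m + p := by omega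
        rwa [h2] at h0
      rw [hper m le_rfl (by omega)]; exact h1
    have hloop : Γ.IsLoop (fun i => u (m + i)) p := by
      refine ⟨by omega, fun i hi => ?_, ?_⟩
      · show Γ.r (u (m + (i + 1))) = Γ.s (u (m + i))
        have h2 : m + (i + 1) = m + i + 1 := by omega
        rw [h2]
        exact hu (m + i) (by omega)
      · show Γ.r (u (m + 0)) = Γ.s (u (m + (p - 1)))
        rw [Nat.add_zero]; exact hclose
    obtain ⟨i0, hi0, f, hfr, hfne⟩ := hexit _ _ hloop
    have hfr' : Γ.r f = Γ.r (u (m + i0)) := hfr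
    have hfne' : f ≠ u (m + i0) := hfne
    have hmul : p * (L₁ + 1) = p * L₁ + p := Nat.mul_succ p L₁
    have hpl : L₁ ≤ p * L₁ := Nat.le_mul_of_pos_left L₁ hp
    set q := m + i0 + p * (L₁ + 1) with hqdef
    have hqL : L₁ + p ≤ q := by omega
    set u' : ℕ → Γ.E := fun j => if j < L₁ then u j else u (m + (j - m) % p) with hu'def
    have hu'form : ∀ j, m ≤ j → u' j = u (m + (j - m) % p) := by
      intro j hj
      by_cases h : j < L₁
      · simp only [hu'def, if_pos h]; exact hform j hj h
      · simp only [hu'def, if_neg h]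
    have hu'eq : ∀ j < L₁, u' j = u j := fun j hj => by simp only [hu'def, if_pos hj]
    have hu'path : ∀ N, FinPath Γ u' N := by
      intro N i _
      by_cases h : i + 1 < L₁
      · rw [hu'eq _ h, hu'eq _ (by omega)]
        exact hu i h
      · have him : m ≤ i := by omega
        rw [hu'form (i + 1) (by omega), hu'form i him]
        have hstep : (i + 1 - m) % p = ((i - m) % p + 1) % p := by
          rw [show i + 1 - m = ((i - m) % p + 1) + p * ((i - m) / p) from by
              have := Nat.div_add_mod (i - m) p; omega,
            Nat.add_mul_mod_self_left]
        set a := (i - m) % p with ha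
        have hap : a < p := Nat.mod_lt _ (by omega)
        rcases lt_or_ge (a + 1) p with h2 | h2
        · rw [hstep, Nat.mod_eq_of_lt h2]
          have h3 : m + (a + 1) = m + a + 1 := by omega
          rw [h3]
          exact hu (m + a) (by omega)
        · have h3 : a + 1 = p := by omega
          rw [hstep, h3, Nat.mod_self, Nat.add_zero]
          have h4 : a = p - 1 := by omega
          rw [h4]
          exact hclose
    refine ⟨(fun j => if j = q then f else u' j, q + 1), ⟨?_, by omega⟩, by omega, ?_,
      q - p, by omega, by omega, ?_⟩
    · intro i hi
      rcases lt_or_ge (i + 1) q with h | h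
      · simp only [if_neg (by omega : ¬ i + 1 = q), if_neg (by omega : ¬ i = q)]
        exact hu'path q i h
      · have h1 : i + 1 = q := by omega
        simp only [if_pos h1, if_neg (by omega : ¬ i = q)]
        rw [hu'form i (by omega), hfr']
        rcases Nat.eq_zero_or_pos i0 with h0 | h0
        · rw [show i - m = (p - 1) + p * L₁ from by omega,
            Nat.add_mul_mod_self_left, Nat.mod_eq_of_lt (by omega : p - 1 < p), h0,
            Nat.add_zero]
          exact hclose
        · rw [show i - m = (i0 - 1) + p * (L₁ + 1) from by omega,
            Nat.add_mul_mod_self_left, Nat.mod_eq_of_lt (by omega : i0 - 1 < p),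
            show m + i0 = m + (i0 - 1) + 1 from by omega]
          exact hu (m + (i0 - 1)) (by omega)
    · intro i hi
      simp only [if_neg (by omega : ¬ i = q)]
      rw [hu'eq i (by omega), hua i hi]
    · simp only [show q - p + p = q from by omega, if_neg (by omega : ¬ q - p = q),
        if_pos rfl]
      rw [hu'form (q - p) (by omega),
        show q - p - m = i0 + p * L₁ from by omega,
        Nat.add_mul_mod_self_left, Nat.mod_eq_of_lt hi0]
      exact hfne'.symm
  · push_neg at hper
    obtain ⟨k, hk1, hk2, hk3⟩ := hper
    exact ⟨(u, L₁), ⟨hu, by omega⟩, by omega, hua, k, hk1, hk2, hk3⟩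

/-- The diagonalizing sequence of finite paths. -/
noncomputable def seq (hnosink : ∀ v : Γ.V, {f : Γ.E | Γ.r f = v}.Nonempty)
    (hexit : ∀ (e : ℕ → Γ.E) (n : ℕ), Γ.IsLoop e n → Γ.LoopHasExit e n) (e0 : Γ.E) :
    ℕ → {wl : (ℕ → Γ.E) × ℕ // FinPath Γ wl.1 wl.2 ∧ 1 ≤ wl.2} :=
  Nat.rec ⟨(fun _ => e0, 1), fun i hi => absurd hi (by omega), le_refl 1⟩
    (fun t prev =>
      ⟨(key_extend hnosink hexit prev.2.1 prev.2.2 (Nat.unpair t).1 ((Nat.unpair t).2 + 1)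
          (Nat.succ_le_succ (Nat.zero_le _))).choose,
       (key_extend hnosink hexit prev.2.1 prev.2.2 (Nat.unpair t).1 ((Nat.unpair t).2 + 1)
          (Nat.succ_le_succ (Nat.zero_le _))).choose_spec.1⟩)

lemma seq_succ_spec (hnosink : ∀ v : Γ.V, {f : Γ.E | Γ.r f = v}.Nonempty)
    (hexit : ∀ (e : ℕ → Γ.E) (n : ℕ), Γ.IsLoop e n → Γ.LoopHasExit e n) (e0 : Γ.E) (t : ℕ) :
    (seq hnosink hexit e0 t).1.2 < (seq hnosink hexit e0 (t + 1)).1.2 ∧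
    (∀ i < (seq hnosink hexit e0 t).1.2,
      (seq hnosink hexit e0 (t + 1)).1.1 i = (seq hnosink hexit e0 t).1.1 i) ∧
    ∃ k, (Nat.unpair t).1 ≤ k ∧
      k + ((Nat.unpair t).2 + 1) < (seq hnosink hexit e0 (t + 1)).1.2 ∧
      (seq hnosink hexit e0 (t + 1)).1.1 k ≠
        (seq hnosink hexit e0 (t + 1)).1.1 (k + ((Nat.unpair t).2 + 1)) :=
  (key_extend hnosink hexit (seq hnosink hexit e0 t).2.1 (seq hnosink hexit e0 t).2.2
    (Nat.unpair t).1 ((Nat.unpair t).2 + 1) (Nat.succ_le_succ (Nat.zero_le _))).choose_spec.2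

lemma seq_len_lt (hnosink : ∀ v : Γ.V, {f : Γ.E | Γ.r f = v}.Nonempty)
    (hexit : ∀ (e : ℕ → Γ.E) (n : ℕ), Γ.IsLoop e n → Γ.LoopHasExit e n) (e0 : Γ.E) (t : ℕ) :
    t + 1 ≤ (seq hnosink hexit e0 t).1.2 := by
  induction t with
  | zero => exact le_refl 1
  | succ n ih => have := (seq_succ_spec hnosink hexit e0 n).1; omega

lemma seq_len_mono (hnosink : ∀ v : Γ.V, {f : Γ.E | Γ.r f = v}.Nonempty)
    (hexit : ∀ (e : ℕ → Γ.E) (n : ℕ), Γ.IsLoop e n → Γ.LoopHasExit e n) (e0 : Γ.E)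
    {t t' : ℕ} (h : t ≤ t') :
    (seq hnosink hexit e0 t).1.2 ≤ (seq hnosink hexit e0 t').1.2 := by
  induction t', h using Nat.le_induction with
  | base => exact le_refl _
  | succ n hn ih => have := (seq_succ_spec hnosink hexit e0 n).1; omega

lemma seq_agree (hnosink : ∀ v : Γ.V, {f : Γ.E | Γ.r f = v}.Nonempty)
    (hexit : ∀ (e : ℕ → Γ.E) (n : ℕ), Γ.IsLoop e n → Γ.LoopHasExit e n) (e0 : Γ.E)
    {t t' : ℕ} (h : t ≤ t') :
    ∀ i < (seq hnosink hexit e0 t).1.2,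
      (seq hnosink hexit e0 t').1.1 i = (seq hnosink hexit e0 t).1.1 i := by
  induction t', h using Nat.le_induction with
  | base => exact fun i _ => rfl
  | succ n hn ih =>
    intro i hi
    have hlen := seq_len_mono hnosink hexit e0 hn
    rw [(seq_succ_spec hnosink hexit e0 n).2.1 i (by omega)]
    exact ih i hi

/-- The limit infinite path. -/
noncomputable def limitPath (hnosink : ∀ v : Γ.V, {f : Γ.E | Γ.r f = v}.Nonempty)
    (hexit : ∀ (e : ℕ → Γ.E) (n : ℕ), Γ.IsLoop e n → Γ.LoopHasExit e n) (e0 : Γ.E)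
    (n : ℕ) : Γ.E :=
  (seq hnosink hexit e0 n).1.1 n

lemma limitPath_eq (hnosink : ∀ v : Γ.V, {f : Γ.E | Γ.r f = v}.Nonempty)
    (hexit : ∀ (e : ℕ → Γ.E) (n : ℕ), Γ.IsLoop e n → Γ.LoopHasExit e n) (e0 : Γ.E)
    (t n : ℕ) (hn : n < (seq hnosink hexit e0 t).1.2) :
    limitPath hnosink hexit e0 n = (seq hnosink hexit e0 t).1.1 n := by
  rcases le_total t n with h | h
  · exact seq_agree hnosink hexit e0 h n hn
  · have hn' : n < (seq hnosink hexit e0 n).1.2 := by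
      have := seq_len_lt hnosink hexit e0 n; omega
    exact (seq_agree hnosink hexit e0 h n hn').symm

lemma exists_aperiodic (hnosink : ∀ v : Γ.V, {f : Γ.E | Γ.r f = v}.Nonempty)
    (hexit : ∀ (e : ℕ → Γ.E) (n : ℕ), Γ.IsLoop e n → Γ.LoopHasExit e n) (v : Γ.V) :
    ∃ x : ℕ → Γ.E, Γ.IsInfPath x ∧ Γ.r (x 0) = v ∧ Γ.AperiodicPath x := by
  obtain ⟨e0, he0⟩ := hnosink v
  refine ⟨limitPath hnosink hexit e0, ?_, ?_, ?_⟩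
  · intro n
    have h1 : n + 1 < (seq hnosink hexit e0 (n + 1)).1.2 := by
      have := seq_len_lt hnosink hexit e0 (n + 1); omega
    rw [limitPath_eq hnosink hexit e0 (n + 1) (n + 1) h1,
      limitPath_eq hnosink hexit e0 (n + 1) n (by omega)]
    exact (seq hnosink hexit e0 (n + 1)).2.1 n h1
  · have h0 : (0 : ℕ) < (seq hnosink hexit e0 0).1.2 := by
      have := seq_len_lt hnosink hexit e0 0; omega
    rw [limitPath_eq hnosink hexit e0 0 0 h0]
    exact he0
  · have key : ∀ m n : ℕ, m < n →
        (fun j => limitPath hnosink hexit e0 (j + m)) =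
          (fun j => limitPath hnosink hexit e0 (j + n)) → False := by
      intro m n hmn h
      set p := n - m with hpdef
      obtain ⟨-, -, k, hk1, hk2, hk3⟩ := seq_succ_spec hnosink hexit e0 (Nat.pair m (p - 1))
      simp only [Nat.unpair_pair] at hk1 hk2 hk3
      have hp1 : p - 1 + 1 = p := by omega
      rw [hp1] at hk2 hk3
      have hx1 := limitPath_eq hnosink hexit e0 (Nat.pair m (p - 1) + 1) k (by omega)
      have hx2 := limitPath_eq hnosink hexit e0 (Nat.pair m (p - 1) + 1) (k + p) hk2
      have hcongr : limitPath hnosink hexit e0 (k - m + m) =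
          limitPath hnosink hexit e0 (k - m + n) := congrFun h (k - m)
      rw [show k - m + m = k from by omega, show k - m + n = k + p from by omega] at hcongr
      exact hk3 (by rw [← hx1, ← hx2, hcongr])
    intro m n h
    rcases lt_trichotomy m n with h1 | h1 | h1
    · exact absurd h (fun h => key m n h1 h)
    · exact h1
    · exact absurd h.symm (fun h => key n m h1 h)

end AperAux

/-- For a row-finite directed graph with no sinks, the path category `E*`
satisfies the aperiodicity condition (every vertex receives an aperiodic
infinite path) if and only if every loop in `E` has an exit. -/
theorem aperiodicity_iff_loops_have_exits (Γ : DirGraph) [Countable Γ.V] [Countable Γ.E]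
    (hrowfin : ∀ v : Γ.V, {f : Γ.E | Γ.r f = v}.Finite)
    (hnosink : ∀ v : Γ.V, {f : Γ.E | Γ.r f = v}.Nonempty) :
    (∀ v : Γ.V, ∃ x : ℕ → Γ.E, Γ.IsInfPath x ∧ Γ.r (x 0) = v ∧ Γ.AperiodicPath x) ↔
      (∀ (e : ℕ → Γ.E) (n : ℕ), Γ.IsLoop e n → Γ.LoopHasExit e n) := by
  constructor
  · intro hap e n hloop
    by_contra hnoex
    obtain ⟨hn, hpath, hclose⟩ := hloop
    obtain ⟨x, hx, hx0, hxap⟩ := hap (Γ.r (e 0))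
    have hforced : ∀ j, x j = e (j % n) := by
      intro j
      induction j with
      | zero =>
        rw [Nat.zero_mod]
        by_contra hne
        exact hnoex ⟨0, hn, x 0, hx0, hne⟩
      | succ j ih =>
        have h1 : Γ.r (x (j + 1)) = Γ.s (e (j % n)) := by rw [hx j, ih]
        have h2 : Γ.s (e (j % n)) = Γ.r (e ((j + 1) % n)) := by
          have ha : j % n < n := Nat.mod_lt _ hn
          rcases lt_or_ge (j % n + 1) n with h | h
          · have hmod : (j + 1) % n = j % n + 1 := by
              rw [show j + 1 = (j % n + 1) + n * (j / n) from by
                  have := Nat.div_add_mod j n; omega,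
                Nat.add_mul_mod_self_left, Nat.mod_eq_of_lt h]
            rw [hmod]
            exact (hpath (j % n) (by omega)).symm
          · have h3 : j % n = n - 1 := by omega
            have hmod : (j + 1) % n = 0 := by
              rw [show j + 1 = n + n * (j / n) from by
                  have := Nat.div_add_mod j n; omega,
                Nat.add_mul_mod_self_left, Nat.mod_self]
            rw [hmod, h3]
            exact hclose.symm
        by_contra hne
        exact hnoex ⟨(j + 1) % n, Nat.mod_lt _ hn, x (j + 1), h1.trans h2, hne⟩
    have hper : (fun j => x (j + 0)) = (fun j => x (j + n)) := by
      funext j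
      rw [hforced (j + 0), hforced (j + n)]
      congr 1
      rw [Nat.add_zero, Nat.add_mod_right]
    have h0n := hxap 0 n hper
    omega
  · intro hexit v
    exact AperAux.exists_aperiodic hnosink hexit v
end
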